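/- Let g : ℝⁿ → ℝ be a convex function, let {z^k} be a sequence in ℝⁿ converging to z* ∈ ℝⁿ, and for each k let u^k ∈ ℝⁿ be a subgradient of g at z^k. Define S_k := {y ∈ ℝⁿ : g(z^k) + ⟨u^k, y − z^k⟩ ≤ 0} and assume S_k is nonempty for every k. If dist(z^k, S_k) → 0 as k → ∞, then g(z*) ≤ 0. -/

import Mathlib

open scoped RealInnerProductSpace
open Metric Filter

theorem stmt_9 {n : ℕ} (hn : 0 < n)
    (g : EuclideanSpace ℝ (Fin n) → ℝ) (hgconv : ConvexOn ℝ Set.univ g)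
    (z : ℕ → EuclideanSpace ℝ (Fin n)) (zstar : EuclideanSpace ℝ (Fin n))
    (hz : Tendsto z atTop (nhds zstar))
    -- `u k` is a subgradient of `g` at `z k`.
    (u : ℕ → EuclideanSpace ℝ (Fin n))
    (hu : ∀ k, ∀ y, g (z k) + ⟪u k, y - z k⟫ ≤ g y)
    (hSne : ∀ k, ({y : EuclideanSpace ℝ (Fin n) | g (z k) + ⟪u k, y - z k⟫ ≤ 0}).Nonempty)
    (hdist : Tendsto
      (fun k => infDist (z k) {y : EuclideanSpace ℝ (Fin n) | g (z k) + ⟪u k, y - z k⟫ ≤ 0})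
      atTop (nhds 0)) :
    g zstar ≤ 0 := by
  -- g is continuous
  have hgcont : Continuous g := by
    rw [← continuousOn_univ]
    exact hgconv.continuousOn isOpen_univ
  -- max of g on closed ball of radius 2
  obtain ⟨x₀, hx₀, hM'⟩ := (isCompact_closedBall zstar 2).exists_isMaxOn
    (nonempty_closedBall.2 (by norm_num)) (hgcont.continuousOn)
  set M := g x₀ with hMdef
  have hM : ∀ y ∈ closedBall zstar 2, g y ≤ M := fun y hy => hM' hy
  have hzstarM : g zstar ≤ M := hM zstar (mem_closedBall_self (by norm_num))
  set C := M - g zstar + 1 with hCdef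
  have hC0 : 0 ≤ C := by simp only [hCdef]; linarith
  -- key pointwise bound: g (z k) ≤ ‖u k‖ * infDist (z k) S_k
  have key : ∀ k, g (z k) ≤ ‖u k‖ *
      infDist (z k) {y : EuclideanSpace ℝ (Fin n) | g (z k) + ⟪u k, y - z k⟫ ≤ 0} := by
    intro k
    set S := {y : EuclideanSpace ℝ (Fin n) | g (z k) + ⟪u k, y - z k⟫ ≤ 0} with hSdef
    by_cases hu0 : u k = 0
    · obtain ⟨y, hy⟩ := hSne k
      simp only [hSdef, Set.mem_setOf_eq, hu0, inner_zero_left, add_zero] at hy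
      have : 0 ≤ infDist (z k) S := infDist_nonneg
      nlinarith [norm_nonneg (u k)]
    · have hun : 0 < ‖u k‖ := norm_pos_iff.2 hu0
      have hle : ∀ y ∈ S, g (z k) ≤ ‖u k‖ * dist (z k) y := by
        intro y hy
        simp only [hSdef, Set.mem_setOf_eq] at hy
        have h1 : ⟪u k, z k - y⟫ ≤ ‖u k‖ * ‖z k - y‖ :=
          (real_inner_le_norm _ _).trans (le_of_eq rfl)
        have h2 : ⟪u k, y - z k⟫ = -⟪u k, z k - y⟫ := by
          rw [← inner_neg_right]; congr 1; abel
        rw [dist_eq_norm]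
        linarith [h2 ▸ hy]
      have : g (z k) / ‖u k‖ ≤ infDist (z k) S := by
        by_contra h
        push_neg at h
        obtain ⟨y, hyS, hylt⟩ := (infDist_lt_iff (hSne k)).1 h
        have := hle y hyS
        rw [lt_div_iff₀ hun] at hylt
        nlinarith
      calc g (z k) = (g (z k) / ‖u k‖) * ‖u k‖ := by field_simp
        _ ≤ infDist (z k) S * ‖u k‖ := by nlinarith [infDist_nonneg (s := S) (x := z k)]
        _ = ‖u k‖ * infDist (z k) S := mul_comm _ _
  -- eventually ‖u k‖ ≤ C
  have hgz : Tendsto (fun k => g (z k)) atTop (nhds (g zstar)) :=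
    (hgcont.tendsto zstar).comp hz
  have hev1 : ∀ᶠ k in atTop, dist (z k) zstar < 1 :=
    (tendsto_iff_dist_tendsto_zero.1 hz).eventually (eventually_lt_nhds one_pos)
  have hev2 : ∀ᶠ k in atTop, g zstar - 1 ≤ g (z k) :=
    hgz.eventually (eventually_ge_nhds (by linarith))
  have hubd : ∀ᶠ k in atTop, ‖u k‖ ≤ C := by
    filter_upwards [hev1, hev2] with k h1 h2
    by_cases hu0 : u k = 0
    · simp [hu0]; linarith
    · have hun : 0 < ‖u k‖ := norm_pos_iff.2 hu0
      set y := z k + ‖u k‖⁻¹ • u k with hy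
      have hiy : ⟪u k, y - z k⟫ = ‖u k‖ := by
        simp only [hy, add_sub_cancel_left, real_inner_smul_right,
          real_inner_self_eq_norm_sq]
        field_simp
      have hyball : y ∈ closedBall zstar 2 := by
        rw [mem_closedBall]
        have : dist y (z k) = 1 := by
          simp only [hy, dist_eq_norm, add_sub_cancel_left, norm_smul, norm_inv,
            norm_norm]
          field_simp
        calc dist y zstar ≤ dist y (z k) + dist (z k) zstar := dist_triangle _ _ _
          _ ≤ 1 + 1 := by rw [this]; linarith
          _ = 2 := by norm_num
      have := hu k y
      rw [hiy] at this
      have := hM y hyball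
      simp only [hCdef]
      linarith
  -- conclude
  have hbound : ∀ᶠ k in atTop, g (z k) ≤ C *
      infDist (z k) {y : EuclideanSpace ℝ (Fin n) | g (z k) + ⟪u k, y - z k⟫ ≤ 0} := by
    filter_upwards [hubd] with k hk
    refine (key k).trans ?_
    have := infDist_nonneg (s := {y : EuclideanSpace ℝ (Fin n) | g (z k) + ⟪u k, y - z k⟫ ≤ 0})
      (x := z k)
    nlinarith
  have hlim : Tendsto (fun k => C *
      infDist (z k) {y : EuclideanSpace ℝ (Fin n) | g (z k) + ⟪u k, y - z k⟫ ≤ 0})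
      atTop (nhds 0) := by
    have := hdist.const_mul C
    simpa using this
  exact le_of_tendsto_of_tendsto hgz hlim hbound
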